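/- Let p_V(z_1, z_2, z_3) = z_1² + z_2² + z_3² − 2z_1z_2 − 2z_2z_3 − 2z_3z_1 be the Varopoulos–Kaijser polynomial. Then sup_{z ∈ D³} |p_V(z)| = 5, where D³ is the open unit polydisc in C³. -/

import Mathlib

/-- The Varopoulos–Kaijser polynomial
`p_V(z₁,z₂,z₃) = z₁² + z₂² + z₃² − 2z₁z₂ − 2z₂z₃ − 2z₃z₁`. -/
noncomputable def pV (z : Fin 3 → ℂ) : ℂ :=
  z 0 ^ 2 + z 1 ^ 2 + z 2 ^ 2 - 2 * z 0 * z 1 - 2 * z 1 * z 2 - 2 * z 2 * z 0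

/-- On the cube `[-1,1]³`, the elementary symmetric polynomial `e₂` is at least `-1`. -/
lemma vk_cube_e2 (a1 a2 a3 : ℝ) (h1 : a1 ^ 2 ≤ 1) (h2 : a2 ^ 2 ≤ 1) (h3 : a3 ^ 2 ≤ 1) :
    -1 ≤ a1 * a2 + a2 * a3 + a3 * a1 := by
  have p1 : (0:ℝ) ≤ 1 + a1 := by nlinarith [sq_nonneg (1 + a1)]
  have p2 : (0:ℝ) ≤ 1 + a2 := by nlinarith [sq_nonneg (1 + a2)]
  have p3 : (0:ℝ) ≤ 1 + a3 := by nlinarith [sq_nonneg (1 + a3)]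
  have m1 : (0:ℝ) ≤ 1 - a1 := by nlinarith [sq_nonneg (1 - a1)]
  have m2 : (0:ℝ) ≤ 1 - a2 := by nlinarith [sq_nonneg (1 - a2)]
  have m3 : (0:ℝ) ≤ 1 - a3 := by nlinarith [sq_nonneg (1 - a3)]
  nlinarith [mul_nonneg (mul_nonneg p1 p2) p3, mul_nonneg (mul_nonneg m1 m2) m3]

/-- The real part bound: `Re pV ≤ 5` on the closed polydisc (in coordinates). -/
lemma vk_re_bound (a1 a2 a3 b1 b2 b3 : ℝ)
    (h1 : a1 ^ 2 + b1 ^ 2 ≤ 1) (h2 : a2 ^ 2 + b2 ^ 2 ≤ 1) (h3 : a3 ^ 2 + b3 ^ 2 ≤ 1) :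
    a1 ^ 2 - b1 ^ 2 + (a2 ^ 2 - b2 ^ 2) + (a3 ^ 2 - b3 ^ 2)
      - 2 * (a1 * a2 - b1 * b2) - 2 * (a2 * a3 - b2 * b3) - 2 * (a3 * a1 - b3 * b1) ≤ 5 := by
  have he : -1 ≤ a1 * a2 + a2 * a3 + a3 * a1 :=
    vk_cube_e2 a1 a2 a3 (by nlinarith [sq_nonneg b1]) (by nlinarith [sq_nonneg b2])
      (by nlinarith [sq_nonneg b3])
  nlinarith [sq_nonneg (b1 - b2), sq_nonneg (b2 - b3), sq_nonneg (b1 - b3), he, h1, h2, h3]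

/-- Norm bound for `pV` on the closed polydisc. -/
lemma vk_norm_le (z : Fin 3 → ℂ) (h : ∀ i, ‖z i‖ ≤ 1) : ‖pV z‖ ≤ 5 := by
  rcases eq_or_ne (pV z) 0 with h0 | h0
  · rw [h0]; norm_num
  obtain ⟨l, hl⟩ := IsAlgClosed.exists_pow_nat_eq ((‖pV z‖ : ℂ) / pV z) two_pos
  have hnorm : ‖l‖ = 1 := by
    have h2 : ‖l‖ ^ 2 = 1 := by
      rw [← norm_pow, hl, norm_div, Complex.norm_real, norm_norm, div_self (norm_ne_zero_iff.2 h0)]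
    nlinarith [norm_nonneg l]
  set w : Fin 3 → ℂ := fun i => l * z i with hw
  have hpw : pV w = ((‖pV z‖ : ℝ) : ℂ) := by
    have : pV w = l ^ 2 * pV z := by simp only [pV, hw]; ring
    rw [this, hl, div_mul_cancel₀ _ h0]
  have hsq : ∀ i, (w i).re ^ 2 + (w i).im ^ 2 ≤ 1 := by
    intro i
    have hle : ‖w i‖ ≤ 1 := by
      rw [hw]; simpa only [norm_mul, hnorm, one_mul] using h i
    have heq : (w i).re ^ 2 + (w i).im ^ 2 = ‖w i‖ ^ 2 := by
      rw [Complex.sq_norm, Complex.normSq_apply]; ring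
    rw [heq]
    nlinarith [norm_nonneg (w i)]
  have hre : (pV w).re ≤ 5 := by
    have hR := vk_re_bound (w 0).re (w 1).re (w 2).re (w 0).im (w 1).im (w 2).im
      (hsq 0) (hsq 1) (hsq 2)
    have hexp : (pV w).re =
        (w 0).re ^ 2 - (w 0).im ^ 2 + ((w 1).re ^ 2 - (w 1).im ^ 2)
          + ((w 2).re ^ 2 - (w 2).im ^ 2)
          - 2 * ((w 0).re * (w 1).re - (w 0).im * (w 1).im)
          - 2 * ((w 1).re * (w 2).re - (w 1).im * (w 2).im)
          - 2 * ((w 2).re * (w 0).re - (w 2).im * (w 0).im) := by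
      simp [pV, Complex.add_re, Complex.sub_re, Complex.mul_re, Complex.mul_im, pow_two]
      ring
    rw [hexp]; linarith
  have : ‖pV z‖ = (pV w).re := by rw [hpw, Complex.ofReal_re]
  linarith

/-- `sup_{z ∈ 𝔻³} |p_V(z)| = 5` over the open unit polydisc `𝔻³ ⊆ ℂ³`. -/
theorem varopoulos_kaijser_sup :
    sSup ((fun z => ‖pV z‖) '' {z : Fin 3 → ℂ | ∀ i, ‖z i‖ < 1}) = 5 := by
  set S : Set ℝ := (fun z => ‖pV z‖) '' {z : Fin 3 → ℂ | ∀ i, ‖z i‖ < 1} with hS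
  have hbdd : BddAbove S := by
    refine ⟨5, ?_⟩
    rintro x ⟨z, hz, rfl⟩
    exact vk_norm_le z fun i => (hz i).le
  have hle : sSup S ≤ 5 := by
    apply Real.sSup_le
    · rintro x ⟨z, hz, rfl⟩
      exact vk_norm_le z fun i => (hz i).le
    · norm_num
  have hge : 5 ≤ sSup S := by
    by_contra hcon
    push_neg at hcon
    set b := sSup S with hb
    have hb0 : 0 ≤ b := by
      have hmem0 : (0 : ℝ) ∈ S := by
        refine ⟨fun _ => 0, fun i => by simp, ?_⟩
        simp [pV]
      exact le_csSup hbdd hmem0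
    set r := Real.sqrt ((b + 5) / 10) with hrdef
    have hr2 : r ^ 2 = (b + 5) / 10 := Real.sq_sqrt (by linarith)
    have hr0 : 0 ≤ r := Real.sqrt_nonneg _
    have hr1 : r < 1 := by nlinarith
    set z : Fin 3 → ℂ := fun i => if i = 2 then -(r : ℂ) else (r : ℂ) with hzdef
    have e0 : z 0 = (r : ℂ) := if_neg (by decide)
    have e1 : z 1 = (r : ℂ) := if_neg (by decide)
    have e2 : z 2 = -(r : ℂ) := if_pos rfl
    have hz : ∀ i, ‖z i‖ < 1 := by
      intro i
      have hnz : ‖z i‖ = |r| := by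
        by_cases hi : i = 2
        · rw [hzdef]; simp [hi]
        · rw [hzdef]; simp [hi]
      rw [hnz, abs_of_nonneg hr0]; exact hr1
    have hpz : pV z = ((5 * r ^ 2 : ℝ) : ℂ) := by
      simp only [pV, e0, e1, e2]
      push_cast
      ring
    have hnorm5 : ‖pV z‖ = 5 * r ^ 2 := by
      rw [hpz, Complex.norm_real, Real.norm_eq_abs, abs_of_nonneg (by positivity)]
    have hmem : ‖pV z‖ ∈ S := ⟨z, hz, rfl⟩
    have hle2 : ‖pV z‖ ≤ b := le_csSup hbdd hmem
    rw [hnorm5] at hle2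
    nlinarith
  linarith
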